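/- (Positivity of the derivative of the potential at the horizon for near-superradiant frequencies.) There exist constants β > 0 and b > 0 depending only on m and a such that for every admissible triple (ξ_τ, ξ_φ, Λ) satisfying −ξ_τ ξ_φ ≤ ω_H ξ_φ² + βΛ², one has V′(r₊) ≥ bΛ². -/

import Mathlib

open Real Set

noncomputable section

/-- The Kerr horizon function `Δ(r) = r² − 2mr + a²`. -/
def kerrDelta (m a r : ℝ) : ℝ := r ^ 2 - 2 * m * r + a ^ 2

/-- The larger root `r₊ = m + √(m² − a²)` of `Δ`. -/
def kerrRp (m a : ℝ) : ℝ := m + Real.sqrt (m ^ 2 - a ^ 2)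

/-- The horizon angular velocity `ω_H = a/(2 m r₊)`. -/
def kerrOmegaH (m a : ℝ) : ℝ := a / (2 * m * kerrRp m a)

/-- The Kerr frequency potential `V`. -/
def kerrV (m a ξτ ξφ Λ r : ℝ) : ℝ :=
  (kerrDelta m a r * Λ ^ 2 - 4 * a * m * r * ξτ * ξφ - a ^ 2 * ξφ ^ 2) / (r ^ 2 + a ^ 2) ^ 2

set_option maxHeartbeats 1200000 in
/-- Positivity of the derivative of the potential at the horizon for near-superradiant
frequencies: there are constants `β, b > 0` depending only on `m, a` such that for every
admissible triple satisfying `−ξτ ξφ ≤ ω_H ξφ² + β Λ²`, one has `V′(r₊) ≥ b Λ²`. -/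
theorem kerr_deriv_potential_pos_at_horizon (m a : ℝ)
    (hm : 0 < m) (ha0 : 0 ≤ a) (ham : a < m) :
    ∃ β > (0 : ℝ), ∃ b > (0 : ℝ), ∀ ξτ ξφ Λ : ℝ,
      0 ≤ Λ → ξφ ^ 2 ≤ Λ ^ 2 → 2 * |a * ξτ * ξφ| ≤ Λ ^ 2 →
      -(ξτ * ξφ) ≤ kerrOmegaH m a * ξφ ^ 2 + β * Λ ^ 2 →
      b * Λ ^ 2 ≤ deriv (kerrV m a ξτ ξφ Λ) (kerrRp m a) := by
  set rp := kerrRp m a with hrpdef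
  have hs2 : Real.sqrt (m ^ 2 - a ^ 2) ^ 2 = m ^ 2 - a ^ 2 :=
    Real.sq_sqrt (by nlinarith)
  have hs0 : 0 < Real.sqrt (m ^ 2 - a ^ 2) :=
    Real.sqrt_pos.mpr (by nlinarith)
  have hrpval : rp = m + Real.sqrt (m ^ 2 - a ^ 2) := rfl
  have hrpm : m < rp := by rw [hrpval]; linarith
  have hrp0 : 0 < rp := by linarith
  have hkey : rp ^ 2 + a ^ 2 = 2 * m * rp := by
    rw [hrpval]; nlinarith [hs2]
  have hma : a ^ 2 < m * rp := by nlinarith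
  refine ⟨(rp - m) * (m * rp - a ^ 2) / (4 * m ^ 2 * rp * (2 * rp - m)),
    div_pos (by nlinarith) (mul_pos (mul_pos (by positivity) hrp0) (by linarith)),
    (rp - m) * (m * rp - a ^ 2) / (4 * m ^ 3 * rp ^ 3),
    div_pos (by nlinarith) (mul_pos (by positivity) (pow_pos hrp0 3)), ?_⟩
  intro ξτ ξφ Λ hΛ hφ _ hβcond
  -- derivative computation
  have hden : 0 < rp ^ 2 + a ^ 2 := by nlinarith
  have hfg : kerrV m a ξτ ξφ Λ = fun r =>
      ((r ^ 2 - 2 * m * r + a ^ 2) * Λ ^ 2 - 4 * a * m * ξτ * ξφ * r - a ^ 2 * ξφ ^ 2)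
        / (r ^ 2 + a ^ 2) ^ 2 := by
    funext r; unfold kerrV kerrDelta; ring_nf
  have h1 : HasDerivAt (fun r : ℝ =>
      (r ^ 2 - 2 * m * r + a ^ 2) * Λ ^ 2 - 4 * a * m * ξτ * ξφ * r - a ^ 2 * ξφ ^ 2)
      ((2 * rp - 2 * m) * Λ ^ 2 - 4 * a * m * ξτ * ξφ) rp := by
    have hq : HasDerivAt (fun r : ℝ => r ^ 2 - 2 * m * r + a ^ 2) (2 * rp - 2 * m) rp := by
      have := ((hasDerivAt_pow 2 rp).sub ((hasDerivAt_id rp).const_mul (2 * m))).add_const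
        (a ^ 2)
      refine this.congr_deriv ?_
      push_cast; ring
    have hl : HasDerivAt (fun r : ℝ => 4 * a * m * ξτ * ξφ * r) (4 * a * m * ξτ * ξφ) rp := by
      simpa using (hasDerivAt_id rp).const_mul (4 * a * m * ξτ * ξφ)
    exact ((hq.mul_const (Λ ^ 2)).sub hl).sub_const (a ^ 2 * ξφ ^ 2)
  have h2 : HasDerivAt (fun r : ℝ => ((r ^ 2 + a ^ 2) ^ 2 : ℝ)) (4 * rp * (rp ^ 2 + a ^ 2)) rp := by
    have := ((hasDerivAt_pow 2 rp).add_const (a ^ 2)).pow 2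
    refine this.congr_deriv ?_
    push_cast; ring
  have hne : ((rp ^ 2 + a ^ 2) ^ 2 : ℝ) ≠ 0 := (pow_pos hden 2).ne'
  have hV : HasDerivAt (fun r =>
      ((r ^ 2 - 2 * m * r + a ^ 2) * Λ ^ 2 - 4 * a * m * ξτ * ξφ * r - a ^ 2 * ξφ ^ 2)
        / (r ^ 2 + a ^ 2) ^ 2) _ rp := h1.div h2 hne
  rw [hfg, hV.deriv]
  have hΔ0 : rp ^ 2 - 2 * m * rp + a ^ 2 = 0 := by linarith
  rw [hkey, hΔ0, le_div_iff₀ (pow_pos (pow_pos (by nlinarith : (0:ℝ) < 2 * m * rp) 2) 2)]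
  have hEq : (rp - m) * (m * rp - a ^ 2) / (4 * m ^ 3 * rp ^ 3) * Λ ^ 2 * ((2 * m * rp) ^ 2) ^ 2
      = 4 * m * rp * ((rp - m) * (m * rp - a ^ 2)) * Λ ^ 2 := by
    field_simp
    ring
  rw [hEq]
  -- convert the frequency condition into a polynomial inequality
  have h4 : (0:ℝ) < 4 * m ^ 2 * rp * (2 * rp - m) :=
    mul_pos (mul_pos (by positivity) hrp0) (by linarith)
  rw [kerrOmegaH, ← hrpdef] at hβcond
  have hβ' : -(ξτ * ξφ) * (4 * m ^ 2 * rp * (2 * rp - m)) ≤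
      2 * a * m * (2 * rp - m) * ξφ ^ 2 + (rp - m) * (m * rp - a ^ 2) * Λ ^ 2 := by
    have h := mul_le_mul_of_nonneg_right hβcond h4.le
    have heq : (a / (2 * m * rp) * ξφ ^ 2 +
        (rp - m) * (m * rp - a ^ 2) / (4 * m ^ 2 * rp * (2 * rp - m)) * Λ ^ 2) *
        (4 * m ^ 2 * rp * (2 * rp - m))
        = 2 * a * m * (2 * rp - m) * ξφ ^ 2 + (rp - m) * (m * rp - a ^ 2) * Λ ^ 2 := by
      have h2m : 2 * rp - m ≠ 0 := by linarith
      field_simp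
      ring
    linarith [heq ▸ h]
  have hrm : (0:ℝ) ≤ rp - m := by linarith
  have H1 := mul_le_mul_of_nonneg_left hβ' (show (0:ℝ) ≤ 4 * a * rp by positivity)
  have H2 : (0:ℝ) ≤ 8 * a ^ 2 * m * rp * (rp - m) * (Λ ^ 2 - ξφ ^ 2) :=
    mul_nonneg (mul_nonneg (by positivity) hrm) (by linarith)
  have H3 : (0:ℝ) ≤ 4 * rp * (rp - m) * (m - a) * (m * rp - a ^ 2) * Λ ^ 2 :=
    mul_nonneg (mul_nonneg (mul_nonneg (mul_nonneg (by positivity) hrm)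
      (by linarith)) (by linarith)) (sq_nonneg Λ)
  nlinarith [H1, H2, H3]
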